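/- Let N ≥ 1, let Λ_1,…,Λ_N ∈ ℂ∖{0}, let ξ ≥ 0 be a real number, and let 1 ≤ m ≤ N, with the additional restriction m ≤ N − 2 in the case ξ = 0. For real t > 0 set s_i(t) := Λ_i t^{N+ξ−i} (real powers of t). Then as t → +∞, t^{−( m(N+ξ) − m(m+1)/2 )} · ê_m( s_1(t), …, s_N(t) ) tends to Λ_1 Λ_2 ⋯ Λ_m. (This computes the q-Whittaker limit of the eigenvalues of the 𝔤-Macdonald operators: with s = q^{λ} t^{ρ(𝔤)} and Λ_i = q^{λ_i}, the limit t^{−m(N+ξ_𝔤 − (m+1)/2)} ê_m(s) equals the dominant monomial Λ^{ω_m} = q^{λ_1 + ⋯ + λ_m}, where ξ_𝔤 ∈ {0, 1/2, 1} is the parameter of the specialization.) -/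

import Mathlib

open scoped BigOperators Topology
open Filter

noncomputable section

/-- The BC-type elementary symmetric function `ê_m` of a family of (nonzero) complex
numbers: `ê_m = ∑_{S, T ⊆ s, |S| + |T| = m} (∏_{i∈S} z_i)(∏_{i∈T} z_i⁻¹)`,
equivalently the coefficient of `z^m` in `∏_{i∈s} (1 + z z_i)(1 + z z_i⁻¹)`. -/
noncomputable def ehatC (m : ℕ) (s : Finset ℕ) (z : ℕ → ℂ) : ℂ :=
  ∑ p ∈ (s.powerset ×ˢ s.powerset).filter (fun p => p.1.card + p.2.card = m),
    (∏ i ∈ p.1, z i) * ∏ i ∈ p.2, (z i)⁻¹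

/-- The q-Whittaker limit of the eigenvalues of the 𝔤-Macdonald operators: with
`s_i(t) = Λ_i t^{N+ξ-i}`, for `1 ≤ m ≤ N` (and `m ≤ N-2` when `ξ = 0`),
`t^{-(m(N+ξ) - m(m+1)/2)} ê_m(s_1(t),…,s_N(t)) → Λ_1 Λ_2 ⋯ Λ_m` as `t → +∞`. -/


-- Gauss sum, real version
lemma gaussR (k : ℕ) : ∑ i ∈ Finset.Icc 1 k, (i : ℝ) = k * (k + 1) / 2 := by
  induction k with
  | zero => simp
  | succ n ih =>
    rw [Finset.sum_Icc_succ_top (by omega : 1 ≤ n + 1), ih]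
    push_cast; ring

-- rpow of a sum
lemma rpow_sum {t : ℝ} (ht : 0 < t) (s : Finset ℕ) (f : ℕ → ℝ) :
    t ^ (∑ i ∈ s, f i) = ∏ i ∈ s, t ^ (f i) := by
  classical
  induction s using Finset.cons_induction with
  | empty => simp
  | cons a s ha ih => rw [Finset.sum_cons, Real.rpow_add ht, Finset.prod_cons, ih]

lemma sum_Icc_le_aux : ∀ (n : ℕ) (S : Finset ℕ), S.card = n → 0 ∉ S →
    ∑ i ∈ Finset.Icc 1 n, i ≤ ∑ i ∈ S, i := by
  intro n
  induction n with
  | zero => intro S h _; simp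
  | succ n ih =>
    intro S hcard h0
    have hne : S.Nonempty := Finset.card_pos.mp (by omega)
    set M := S.max' hne with hMdef
    have hMS : M ∈ S := S.max'_mem hne
    have hsub : S ⊆ Finset.Icc 1 M := by
      intro x hx
      simp only [Finset.mem_Icc]
      have hx1 : x ≠ 0 := fun h => h0 (h ▸ hx)
      exact ⟨by omega, S.le_max' x hx⟩
    have hM : n + 1 ≤ M := by
      have := Finset.card_le_card hsub
      rw [hcard, Nat.card_Icc] at this
      omega
    have hc : (S.erase M).card = n := by rw [Finset.card_erase_of_mem hMS, hcard]; omega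
    have h0' : 0 ∉ S.erase M := fun h => h0 (Finset.mem_of_mem_erase h)
    have := ih (S.erase M) hc h0'
    calc ∑ i ∈ Finset.Icc 1 (n+1), i = (∑ i ∈ Finset.Icc 1 n, i) + (n+1) :=
          Finset.sum_Icc_succ_top (by omega) _
      _ ≤ (∑ i ∈ S.erase M, i) + M := add_le_add this hM
      _ = ∑ i ∈ S, i := Finset.sum_erase_add S _ hMS

lemma sum_Icc_lt_aux : ∀ (n : ℕ) (S : Finset ℕ), S.card = n → 0 ∉ S →
    S ≠ Finset.Icc 1 n → ∑ i ∈ Finset.Icc 1 n, i < ∑ i ∈ S, i := by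
  intro n
  induction n with
  | zero => intro S h _ hne; exact absurd (Finset.card_eq_zero.mp h) (by simpa using hne)
  | succ n ih =>
    intro S hcard h0 hneq
    have hne : S.Nonempty := Finset.card_pos.mp (by omega)
    set M := S.max' hne with hMdef
    have hMS : M ∈ S := S.max'_mem hne
    have hsub : S ⊆ Finset.Icc 1 M := by
      intro x hx
      simp only [Finset.mem_Icc]
      have hx1 : x ≠ 0 := fun h => h0 (h ▸ hx)
      exact ⟨by omega, S.le_max' x hx⟩
    have hM : n + 1 ≤ M := by
      have := Finset.card_le_card hsub
      rw [hcard, Nat.card_Icc] at this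
      omega
    have hc : (S.erase M).card = n := by rw [Finset.card_erase_of_mem hMS, hcard]; omega
    have h0' : 0 ∉ S.erase M := fun h => h0 (Finset.mem_of_mem_erase h)
    rcases eq_or_lt_of_le hM with hMeq | hMlt
    · -- M = n+1, erase ≠ Icc 1 n
      have herne : S.erase M ≠ Finset.Icc 1 n := by
        intro h
        apply hneq
        have : S = insert M (S.erase M) := (Finset.insert_erase hMS).symm
        rw [this, h, ← hMeq]
        ext x; simp [Finset.mem_Icc]; omega
      have := ih (S.erase M) hc h0' herne
      calc ∑ i ∈ Finset.Icc 1 (n+1), i = (∑ i ∈ Finset.Icc 1 n, i) + (n+1) :=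
            Finset.sum_Icc_succ_top (by omega) _
        _ < (∑ i ∈ S.erase M, i) + M := by omega
        _ = ∑ i ∈ S, i := Finset.sum_erase_add S _ hMS
    · have := sum_Icc_le_aux n (S.erase M) hc h0'
      calc ∑ i ∈ Finset.Icc 1 (n+1), i = (∑ i ∈ Finset.Icc 1 n, i) + (n+1) :=
            Finset.sum_Icc_succ_top (by omega) _
        _ < (∑ i ∈ S.erase M, i) + M := by omega
        _ = ∑ i ∈ S, i := Finset.sum_erase_add S _ hMS

lemma expo_lt (N m : ℕ) (ξ : ℝ) (hξ : 0 ≤ ξ) (hmN : m ≤ N) (hm1 : 1 ≤ m)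
    (hm0 : ξ = 0 → m ≤ N - 2)
    (S T : Finset ℕ) (hS : S ⊆ Finset.Icc 1 N) (hT : T ⊆ Finset.Icc 1 N)
    (hcard : S.card + T.card = m) (hne : ¬(S = Finset.Icc 1 m ∧ T = ∅)) :
    (∑ i ∈ S, ((N:ℝ) + ξ - i)) - (∑ i ∈ T, ((N:ℝ) + ξ - i))
      < m * ((N:ℝ) + ξ) - m * (m + 1) / 2 := by
  have hsum : ∀ U : Finset ℕ, ∑ i ∈ U, ((N:ℝ) + ξ - (i:ℝ))
      = U.card * ((N:ℝ) + ξ) - ((∑ i ∈ U, i : ℕ) : ℝ) := by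
    intro U
    rw [Finset.sum_sub_distrib, Finset.sum_const, nsmul_eq_mul]
    push_cast
    ring
  have h0S : 0 ∉ S := fun h => by have := hS h; simp [Finset.mem_Icc] at this
  rw [hsum S, hsum T]
  by_cases hT0 : T = ∅
  · subst hT0
    simp only [Finset.card_empty, Nat.add_zero] at hcard
    have hSne : S ≠ Finset.Icc 1 m := fun h => hne ⟨h, rfl⟩
    have hlt := sum_Icc_lt_aux m S hcard h0S hSne
    have hg : ((∑ i ∈ Finset.Icc 1 m, i : ℕ) : ℝ) = m * (m + 1) / 2 := by
      rw [Nat.cast_sum]; exact gaussR m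
    have hσ : (m:ℝ) * (m + 1) / 2 < ((∑ i ∈ S, i : ℕ) : ℝ) := by
      rw [← hg]; exact_mod_cast hlt
    rw [hcard]
    simp only [Finset.sum_empty, Nat.cast_zero, Finset.card_empty]
    push_cast
    push_cast at hσ
    linarith
  · -- T nonempty
    have hl1 : 1 ≤ T.card := Finset.card_pos.mpr (Finset.nonempty_iff_ne_empty.mpr hT0)
    have hσS := sum_Icc_le_aux S.card S rfl h0S
    have hg : ((∑ i ∈ Finset.Icc 1 S.card, i : ℕ) : ℝ) = S.card * (S.card + 1) / 2 := by
      rw [Nat.cast_sum]; exact gaussR S.card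
    have hσSr : ((S.card : ℝ)) * (S.card + 1) / 2 ≤ ((∑ i ∈ S, i : ℕ) : ℝ) := by
      rw [← hg]; exact_mod_cast hσS
    have hσT : (∑ i ∈ T, i) ≤ T.card * N := by
      calc (∑ i ∈ T, i) ≤ ∑ _i ∈ T, N :=
            Finset.sum_le_sum (fun i hi => (Finset.mem_Icc.mp (hT hi)).2)
        _ = T.card * N := by rw [Finset.sum_const, smul_eq_mul]
    have hσTr : ((∑ i ∈ T, i : ℕ) : ℝ) ≤ (T.card : ℝ) * N := by exact_mod_cast hσT
    have hpos : (0:ℝ) < (N:ℝ) - m + 2 * ξ := by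
      rcases eq_or_lt_of_le hξ with h0 | h0
      · have := hm0 h0.symm
        have h2 : m + 2 ≤ N := by omega
        have : (m:ℝ) + 2 ≤ N := by exact_mod_cast h2
        linarith
      · have : (m:ℝ) ≤ N := by exact_mod_cast hmN
        linarith
    have hk : (S.card : ℝ) + T.card = m := by exact_mod_cast hcard
    have hl : (1:ℝ) ≤ T.card := by exact_mod_cast hl1
    nlinarith [mul_pos (lt_of_lt_of_le zero_lt_one hl) hpos,
      mul_nonneg (sub_nonneg.mpr hl) (sub_nonneg.mpr hl),
      mul_le_mul_of_nonneg_left hpos.le (le_of_lt (lt_of_lt_of_le zero_lt_one hl))]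

theorem ehat_whittaker_limit (N : ℕ) (hN : 1 ≤ N) (ξ : ℝ) (hξ : 0 ≤ ξ)
    (Λ : ℕ → ℂ) (hΛ : ∀ i ∈ Finset.Icc 1 N, Λ i ≠ 0)
    (m : ℕ) (hm1 : 1 ≤ m) (hmN : m ≤ N) (hm0 : ξ = 0 → m ≤ N - 2) :
    Tendsto (fun t : ℝ =>
        ((t ^ (-((m : ℝ) * ((N : ℝ) + ξ) - (m : ℝ) * ((m : ℝ) + 1) / 2)) : ℝ) : ℂ) *
          ehatC m (Finset.Icc 1 N)
            (fun i => Λ i * ((t ^ ((N : ℝ) + ξ - (i : ℝ)) : ℝ) : ℂ)))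
      atTop (𝓝 (∏ i ∈ Finset.Icc 1 m, Λ i)) := by
  classical
  set a : ℕ → ℝ := fun i => (N:ℝ) + ξ - i with ha
  set E : ℝ := (m:ℝ) * ((N:ℝ) + ξ) - (m:ℝ) * ((m:ℝ) + 1) / 2 with hEdef
  set P := ((Finset.Icc 1 N).powerset ×ˢ (Finset.Icc 1 N).powerset).filter
      (fun p => p.1.card + p.2.card = m) with hP
  set c : Finset ℕ × Finset ℕ → ℂ := fun p => (∏ i ∈ p.1, Λ i) * ∏ i ∈ p.2, (Λ i)⁻¹ with hc
  set e : Finset ℕ × Finset ℕ → ℝ := fun p => (∑ i ∈ p.1, a i) - ∑ i ∈ p.2, a i with he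
  set main : Finset ℕ × Finset ℕ := (Finset.Icc 1 m, (∅ : Finset ℕ)) with hmain
  have hmainP : main ∈ P := by
    simp only [hP, Finset.mem_filter, Finset.mem_product, Finset.mem_powerset]
    refine ⟨⟨Finset.Icc_subset_Icc le_rfl hmN, Finset.empty_subset _⟩, ?_⟩
    simp [hmain, Nat.card_Icc]
  have hEmain : e main = E := by
    simp only [he, hmain, ha, Finset.sum_empty, sub_zero]
    rw [Finset.sum_sub_distrib, Finset.sum_const, nsmul_eq_mul, Nat.card_Icc, gaussR]
    simp only [hEdef]
    push_cast
    ring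
  have key : Tendsto (fun t : ℝ => ∑ p ∈ P, c p * ((t ^ (e p - E) : ℝ) : ℂ)) atTop
      (𝓝 (∏ i ∈ Finset.Icc 1 m, Λ i)) := by
    have hlim : (∑ p ∈ P, if p = main then (∏ i ∈ Finset.Icc 1 m, Λ i) else 0)
        = ∏ i ∈ Finset.Icc 1 m, Λ i := by
      rw [Finset.sum_ite_eq' P main]
      exact if_pos hmainP
    rw [← hlim]
    refine tendsto_finset_sum _ (fun p hp => ?_)
    by_cases hpm : p = main
    · rw [if_pos hpm, hpm]
      have h0 : e main - E = 0 := by rw [hEmain]; ring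
      have hcm : c main = ∏ i ∈ Finset.Icc 1 m, Λ i := by simp [hc, hmain]
      simp only [h0, Real.rpow_zero, Complex.ofReal_one, mul_one, hcm]
      exact tendsto_const_nhds
    · rw [if_neg hpm]
      simp only [hP, Finset.mem_filter, Finset.mem_product, Finset.mem_powerset] at hp
      have hne : ¬(p.1 = Finset.Icc 1 m ∧ p.2 = ∅) := by
        rintro ⟨h1, h2⟩
        exact hpm (Prod.ext h1 h2)
      have hlt : e p < E := expo_lt N m ξ hξ hmN hm1 hm0 p.1 p.2 hp.1.1 hp.1.2 hp.2 hne
      have h0 : Tendsto (fun t : ℝ => t ^ (e p - E)) atTop (𝓝 0) := by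
        have := tendsto_rpow_neg_atTop (y := E - e p) (by linarith)
        simpa [neg_sub] using this
      have h1 : Tendsto (fun t : ℝ => ((t ^ (e p - E) : ℝ) : ℂ)) atTop (𝓝 (0 : ℂ)) := by
        have := (Complex.continuous_ofReal.tendsto 0).comp h0
        exact this
      have := h1.const_mul (c p)
      simpa using this
  refine key.congr' ?_
  filter_upwards [eventually_gt_atTop (0:ℝ)] with t ht
  rw [ehatC, Finset.mul_sum, ← hP]
  refine Finset.sum_congr rfl (fun p hp => ?_)
  have hprod : ∀ U : Finset ℕ, ((t ^ (∑ i ∈ U, a i) : ℝ) : ℂ)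
      = ∏ i ∈ U, ((t ^ a i : ℝ) : ℂ) := by
    intro U; rw [rpow_sum ht, Complex.ofReal_prod]
  have h1 : (∏ i ∈ p.1, (Λ i * ((t ^ a i : ℝ) : ℂ)))
      = (∏ i ∈ p.1, Λ i) * ((t ^ (∑ i ∈ p.1, a i) : ℝ) : ℂ) := by
    rw [Finset.prod_mul_distrib, hprod]
  have h2 : (∏ i ∈ p.2, (Λ i * ((t ^ a i : ℝ) : ℂ))⁻¹)
      = (∏ i ∈ p.2, (Λ i)⁻¹) * (((t ^ (∑ i ∈ p.2, a i) : ℝ) : ℂ))⁻¹ := by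
    calc (∏ i ∈ p.2, (Λ i * ((t ^ a i : ℝ) : ℂ))⁻¹)
        = (∏ i ∈ p.2, (Λ i * ((t ^ a i : ℝ) : ℂ)))⁻¹ := by
          rw [Finset.prod_inv_distrib]
      _ = ((∏ i ∈ p.2, Λ i) * ((t ^ (∑ i ∈ p.2, a i) : ℝ) : ℂ))⁻¹ := by
          rw [Finset.prod_mul_distrib, hprod]
      _ = (∏ i ∈ p.2, (Λ i)⁻¹) * (((t ^ (∑ i ∈ p.2, a i) : ℝ) : ℂ))⁻¹ := by
          rw [mul_inv, Finset.prod_inv_distrib]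
  have h3 : (t : ℝ) ^ (e p - E)
      = t ^ (∑ i ∈ p.1, a i) * (t ^ (∑ i ∈ p.2, a i))⁻¹ * (t ^ E)⁻¹ := by
    rw [← Real.rpow_neg ht.le, ← Real.rpow_neg ht.le, ← Real.rpow_add ht,
      ← Real.rpow_add ht]
    rw [show e p - E = (∑ i ∈ p.1, a i) + -∑ i ∈ p.2, a i + -E from by
      simp only [he]; ring]
  calc c p * ((t ^ (e p - E) : ℝ) : ℂ)
      = ((∏ i ∈ p.1, Λ i) * ∏ i ∈ p.2, (Λ i)⁻¹) *
        (((t ^ (∑ i ∈ p.1, a i) : ℝ) : ℂ) * (((t ^ (∑ i ∈ p.2, a i) : ℝ) : ℂ))⁻¹ *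
          (((t ^ E : ℝ) : ℂ))⁻¹) := by
        rw [hc, h3]; push_cast; ring
    _ = ((t ^ (-E) : ℝ) : ℂ) *
        ((∏ i ∈ p.1, (Λ i * ((t ^ a i : ℝ) : ℂ))) *
          ∏ i ∈ p.2, (Λ i * ((t ^ a i : ℝ) : ℂ))⁻¹) := by
        rw [h1, h2, Real.rpow_neg ht.le]
        push_cast
        ring
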